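/- arXiv:1705.09950 — 2 statements merged into one kernel-verified Lean document; each statement's English description precedes it below -/
import Mathlib

section
/- Three points Γᵢ, Γⱼ, Γₖ on the unit 2-sphere lie on a common great circle of S² if and only if one of the following holds for their pairwise geodesic distances: θᵢⱼ = |θᵢₖ − θⱼₖ|, or θᵢⱼ = θᵢₖ + θⱼₖ, or θᵢⱼ + θᵢₖ + θⱼₖ = 2π. -/
open Matrix Real

set_option maxHeartbeats 1000000

noncomputable section

/-- The hat (cross-product) matrix of `k`, satisfying `hat k *ᵥ y = k ×₃ y`. -/
def hat (k : Fin 3 → ℝ) : Matrix (Fin 3) (Fin 3) ℝ :=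
  !![0, -k 2, k 1; k 2, 0, -k 0; -k 1, k 0, 0]

/-- Membership in the unit 2-sphere. -/
def S2 (x : Fin 3 → ℝ) : Prop := x ⬝ᵥ x = 1

/-- Geodesic distance on the unit sphere. -/
def geo (x y : Fin 3 → ℝ) : ℝ := Real.arccos (x ⬝ᵥ y)

private lemma cs_aux (x y : Fin 3 → ℝ) (hx : S2 x) (hy : S2 y) : (x ⬝ᵥ y) ^ 2 ≤ 1 := by
  simp only [S2, dotProduct, Fin.sum_univ_three] at hx hy ⊢
  nlinarith [sq_nonneg (x 0 * y 1 - x 1 * y 0), sq_nonneg (x 0 * y 2 - x 2 * y 0),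
    sq_nonneg (x 1 * y 2 - x 2 * y 1)]

theorem stmt_3 (Γi Γj Γk : Fin 3 → ℝ) (hi : S2 Γi) (hj : S2 Γj) (hk : S2 Γk) :
    (∃ u : Fin 3 → ℝ, S2 u ∧ u ⬝ᵥ Γi = 0 ∧ u ⬝ᵥ Γj = 0 ∧ u ⬝ᵥ Γk = 0) ↔
      (geo Γi Γj = |geo Γi Γk - geo Γj Γk| ∨
        geo Γi Γj = geo Γi Γk + geo Γj Γk ∨
        geo Γi Γj + geo Γi Γk + geo Γj Γk = 2 * π) := by
  set a := Γi ⬝ᵥ Γj with ha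
  set b := Γi ⬝ᵥ Γk with hb
  set c := Γj ⬝ᵥ Γk with hc
  have pa : a ^ 2 ≤ 1 := cs_aux _ _ hi hj
  have pb : b ^ 2 ≤ 1 := cs_aux _ _ hi hk
  have pc : c ^ 2 ≤ 1 := cs_aux _ _ hj hk
  set M : Matrix (Fin 3) (Fin 3) ℝ := Matrix.of ![Γi, Γj, Γk] with hM
  -- Gram determinant identity
  have hdet : M.det ^ 2 = 1 + 2 * a * b * c - a ^ 2 - b ^ 2 - c ^ 2 := by
    have h1 := hi; have h2 := hj; have h3 := hk
    simp only [S2, dotProduct, Fin.sum_univ_three] at h1 h2 h3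
    simp only [ha, hb, hc, dotProduct, Fin.sum_univ_three]
    simp only [hM, Matrix.det_fin_three, Matrix.of_apply]
    simp only [Matrix.cons_val', Matrix.cons_val_zero, Matrix.cons_val_one, Matrix.head_cons,
      Matrix.cons_val_two, Matrix.tail_cons, Matrix.head_fin_const]
    linear_combination ((Γj 0 * Γj 0 + Γj 1 * Γj 1 + Γj 2 * Γj 2) *
        (Γk 0 * Γk 0 + Γk 1 * Γk 1 + Γk 2 * Γk 2) -
        (Γj 0 * Γk 0 + Γj 1 * Γk 1 + Γj 2 * Γk 2) ^ 2) * h1 +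
      ((Γk 0 * Γk 0 + Γk 1 * Γk 1 + Γk 2 * Γk 2) -
        (Γi 0 * Γk 0 + Γi 1 * Γk 1 + Γi 2 * Γk 2) ^ 2) * h2 +
      (1 - (Γi 0 * Γj 0 + Γi 1 * Γj 1 + Γi 2 * Γj 2) ^ 2) * h3
  -- existence of common orthogonal unit vector ↔ det M = 0
  have hrow0 : M 0 = Γi := rfl
  have hrow1 : M 1 = Γj := rfl
  have hrow2 : M 2 = Γk := rfl
  have hiff : (∃ u : Fin 3 → ℝ, S2 u ∧ u ⬝ᵥ Γi = 0 ∧ u ⬝ᵥ Γj = 0 ∧ u ⬝ᵥ Γk = 0) ↔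
      M.det = 0 := by
    rw [← Matrix.exists_mulVec_eq_zero_iff]
    constructor
    · rintro ⟨u, hu, h1, h2, h3⟩
      refine ⟨u, ?_, ?_⟩
      · intro h0
        rw [h0] at hu
        simp [S2] at hu
      · funext r
        fin_cases r
        · show Γi ⬝ᵥ u = (0 : ℝ); rw [dotProduct_comm]; exact h1
        · show Γj ⬝ᵥ u = (0 : ℝ); rw [dotProduct_comm]; exact h2
        · show Γk ⬝ᵥ u = (0 : ℝ); rw [dotProduct_comm]; exact h3
    · rintro ⟨v, hv0, hv⟩
      have hnn : (0:ℝ) ≤ v ⬝ᵥ v :=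
        Finset.sum_nonneg fun i _ => mul_self_nonneg (v i)
      have hn : (0:ℝ) < v ⬝ᵥ v := by
        rcases lt_or_eq_of_le hnn with h | h
        · exact h
        · exact absurd (dotProduct_self_eq_zero.mp h.symm) hv0
      have e1 : Γi ⬝ᵥ v = 0 := congrFun hv 0
      have e2 : Γj ⬝ᵥ v = 0 := congrFun hv 1
      have e3 : Γk ⬝ᵥ v = 0 := congrFun hv 2
      refine ⟨(Real.sqrt (v ⬝ᵥ v))⁻¹ • v, ?_, ?_, ?_, ?_⟩
      · have hs : Real.sqrt (v ⬝ᵥ v) ≠ 0 := by positivity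
        have hs2 : Real.sqrt (v ⬝ᵥ v) ^ 2 = v ⬝ᵥ v := Real.sq_sqrt hnn
        show ((Real.sqrt (v ⬝ᵥ v))⁻¹ • v) ⬝ᵥ ((Real.sqrt (v ⬝ᵥ v))⁻¹ • v) = 1
        rw [smul_dotProduct, dotProduct_smul, smul_eq_mul, smul_eq_mul,
          ← mul_assoc, ← mul_inv, Real.mul_self_sqrt hnn, inv_mul_cancel₀ hn.ne']
      · rw [smul_dotProduct, dotProduct_comm v Γi, e1, smul_zero]
      · rw [smul_dotProduct, dotProduct_comm v Γj, e2, smul_zero]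
      · rw [smul_dotProduct, dotProduct_comm v Γk, e3, smul_zero]
  rw [hiff]
  -- now pure trigonometry
  have hb1 : -1 ≤ b := by nlinarith
  have hb2 : b ≤ 1 := by nlinarith
  have hc1 : -1 ≤ c := by nlinarith
  have hc2 : c ≤ 1 := by nlinarith
  have ha1 : -1 ≤ a := by nlinarith
  have ha2 : a ≤ 1 := by nlinarith
  have cosij : Real.cos (geo Γi Γj) = a := Real.cos_arccos ha1 ha2
  have cosik : Real.cos (geo Γi Γk) = b := Real.cos_arccos hb1 hb2
  have cosjk : Real.cos (geo Γj Γk) = c := Real.cos_arccos hc1 hc2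
  have sinik : Real.sin (geo Γi Γk) = Real.sqrt (1 - b ^ 2) := Real.sin_arccos b
  have sinjk : Real.sin (geo Γj Γk) = Real.sqrt (1 - c ^ 2) := Real.sin_arccos c
  have sqb : Real.sqrt (1 - b ^ 2) ^ 2 = 1 - b ^ 2 := Real.sq_sqrt (by nlinarith)
  have sqc : Real.sqrt (1 - c ^ 2) ^ 2 = 1 - c ^ 2 := Real.sq_sqrt (by nlinarith)
  have gij0 : 0 ≤ geo Γi Γj := Real.arccos_nonneg _
  have gijπ : geo Γi Γj ≤ π := Real.arccos_le_pi _
  have gik0 : 0 ≤ geo Γi Γk := Real.arccos_nonneg _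
  have gikπ : geo Γi Γk ≤ π := Real.arccos_le_pi _
  have gjk0 : 0 ≤ geo Γj Γk := Real.arccos_nonneg _
  have gjkπ : geo Γj Γk ≤ π := Real.arccos_le_pi _
  have hgeoij : geo Γi Γj = Real.arccos a := rfl
  constructor
  · intro hdet0
    have hsq : (a - b * c) ^ 2 = (1 - b ^ 2) * (1 - c ^ 2) := by
      have : M.det ^ 2 = 0 := by rw [hdet0]; ring
      rw [hdet] at this
      linear_combination -this
    have habs : |a - b * c| = Real.sqrt (1 - b ^ 2) * Real.sqrt (1 - c ^ 2) := by
      rw [← Real.sqrt_mul (by nlinarith) (1 - c ^ 2), ← hsq, Real.sqrt_sq_eq_abs]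
    rcases abs_eq (by positivity : (0:ℝ) ≤ Real.sqrt (1 - b ^ 2) * Real.sqrt (1 - c ^ 2)) |>.mp habs with h | h
    · -- a = bc + ss : θij = |θik − θjk|
      left
      have hcos : Real.cos (geo Γi Γk - geo Γj Γk) = a := by
        rw [Real.cos_sub, cosik, cosjk, sinik, sinjk]; linarith
      have hbnd : |geo Γi Γk - geo Γj Γk| ≤ π := abs_le.mpr ⟨by linarith, by linarith⟩
      rw [hgeoij, ← hcos, ← Real.cos_abs, Real.arccos_cos (abs_nonneg _) hbnd]
    · -- a = bc − ss : θij = θik + θjk or sum = 2π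
      have hcos : Real.cos (geo Γi Γk + geo Γj Γk) = a := by
        rw [Real.cos_add, cosik, cosjk, sinik, sinjk]; linarith
      rcases le_or_gt (geo Γi Γk + geo Γj Γk) π with hle | hgt
      · right; left
        rw [hgeoij, ← hcos, Real.arccos_cos (by linarith) hle]
      · right; right
        have hcos2 : Real.cos (2 * π - (geo Γi Γk + geo Γj Γk)) = a := by
          rw [Real.cos_sub, Real.cos_two_pi, Real.sin_two_pi, hcos]; ring
        have : geo Γi Γj = 2 * π - (geo Γi Γk + geo Γj Γk) := by
          rw [hgeoij, ← hcos2, Real.arccos_cos (by linarith) (by linarith)]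
        linarith
  · intro hang
    have hA : a = b * c + Real.sqrt (1 - b ^ 2) * Real.sqrt (1 - c ^ 2) ∨
        a = b * c - Real.sqrt (1 - b ^ 2) * Real.sqrt (1 - c ^ 2) := by
      rcases hang with h | h | h
      · left
        have : a = Real.cos (geo Γi Γk - geo Γj Γk) := by
          rw [← cosij, h, Real.cos_abs]
        rw [this, Real.cos_sub, cosik, cosjk, sinik, sinjk]
      · right
        have : a = Real.cos (geo Γi Γk + geo Γj Γk) := by rw [← cosij, h]
        rw [this, Real.cos_add, cosik, cosjk, sinik, sinjk]
      · right
        have h' : geo Γi Γj = 2 * π - (geo Γi Γk + geo Γj Γk) := by linarith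
        have : a = Real.cos (geo Γi Γk + geo Γj Γk) := by
          rw [← cosij, h', Real.cos_sub, Real.cos_two_pi, Real.sin_two_pi]; ring
        rw [this, Real.cos_add, cosik, cosjk, sinik, sinjk]
    have hsq : (a - b * c) ^ 2 = (1 - b ^ 2) * (1 - c ^ 2) := by
      rcases hA with h | h <;> rw [h] <;> nlinarith [sqb, sqc]
    have : M.det ^ 2 = 0 := by rw [hdet]; linear_combination -hsq
    exact pow_eq_zero_iff (n := 2) (by norm_num) |>.mp this
end
end

section
/- Let n ≥ 3 be odd and Γ₁, …, Γₙ ∈ S² with cyclic indices. Then Σᵢ₌₁ⁿ arccos(Γᵢᵀ Γᵢ₊₁) ≤ (n−1)π, and consequently min_i arccos(Γᵢᵀ Γᵢ₊₁) ≤ π − π/n. -/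
open Matrix Real

noncomputable section

lemma cs3 (u v : Fin 3 → ℝ) : (u ⬝ᵥ v)^2 ≤ (u ⬝ᵥ u) * (v ⬝ᵥ v) := by
  simp only [dotProduct, Fin.sum_univ_three]
  nlinarith [sq_nonneg (u 0 * v 1 - u 1 * v 0), sq_nonneg (u 0 * v 2 - u 2 * v 0),
    sq_nonneg (u 1 * v 2 - u 2 * v 1)]

lemma arccos_anti {x y : ℝ} (h : x ≤ y) : Real.arccos y ≤ Real.arccos x := by
  rw [Real.arccos, Real.arccos]
  linarith [Real.monotone_arcsin h]

lemma geo_triangle (a b c : Fin 3 → ℝ) (ha : S2 a) (hb : S2 b) (hc : S2 c) :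
    geo a c ≤ geo a b + geo b c := by
  have haa : a ⬝ᵥ a = 1 := ha
  have hbb : b ⬝ᵥ b = 1 := hb
  have hcc : c ⬝ᵥ c = 1 := hc
  by_cases hπ : π ≤ geo a b + geo b c
  · exact le_trans (Real.arccos_le_pi _) hπ
  push_neg at hπ
  set t := a ⬝ᵥ b with ht
  set s := b ⬝ᵥ c with hs
  have hba : b ⬝ᵥ a = t := (dotProduct_comm b a).trans ht.symm
  have hcb : c ⬝ᵥ b = s := (dotProduct_comm c b).trans hs.symm
  have ht2 : t^2 ≤ 1 := by
    have := cs3 a b; rw [haa, hbb, mul_one, ← ht] at this; exact this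
  have hs2 : s^2 ≤ 1 := by
    have := cs3 b c; rw [hbb, hcc, mul_one, ← hs] at this; exact this
  have ht1 : -1 ≤ t := by nlinarith
  have ht1' : t ≤ 1 := by nlinarith
  have hs1 : -1 ≤ s := by nlinarith
  have hs1' : s ≤ 1 := by nlinarith
  set u : Fin 3 → ℝ := a - t • b with hu
  set v : Fin 3 → ℝ := c - s • b with hv
  have huu : u ⬝ᵥ u = 1 - t^2 := by
    simp only [hu, sub_dotProduct, dotProduct_sub, smul_dotProduct, dotProduct_smul,
      smul_eq_mul, haa, hbb, hba, ← ht]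
    ring
  have hvv : v ⬝ᵥ v = 1 - s^2 := by
    simp only [hv, sub_dotProduct, dotProduct_sub, smul_dotProduct, dotProduct_smul,
      smul_eq_mul, hcc, hbb, hcb, ← hs]
    ring
  have huv : u ⬝ᵥ v = a ⬝ᵥ c - t * s := by
    simp only [hu, hv, sub_dotProduct, dotProduct_sub, smul_dotProduct, dotProduct_smul,
      smul_eq_mul, hbb, hcb, ← ht, ← hs]
    ring
  have hcs := cs3 u v
  rw [huu, hvv, huv] at hcs
  set A := Real.sqrt (1 - t^2) with hA
  set B := Real.sqrt (1 - s^2) with hB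
  have hA0 : 0 ≤ A := Real.sqrt_nonneg _
  have hB0 : 0 ≤ B := Real.sqrt_nonneg _
  have hA2 : A^2 = 1 - t^2 := Real.sq_sqrt (by nlinarith)
  have hB2 : B^2 = 1 - s^2 := Real.sq_sqrt (by nlinarith)
  have hkey : t * s - A * B ≤ a ⬝ᵥ c := by nlinarith [mul_nonneg hA0 hB0]
  have hcosadd : Real.cos (geo a b + geo b c) = t * s - A * B := by
    rw [geo, geo, ← ht, ← hs, Real.cos_add, Real.cos_arccos ht1 ht1',
      Real.cos_arccos hs1 hs1', Real.sin_arccos, Real.sin_arccos, ← hA, ← hB]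
  have h0 : 0 ≤ geo a b + geo b c :=
    add_nonneg (Real.arccos_nonneg _) (Real.arccos_nonneg _)
  calc geo a c = Real.arccos (a ⬝ᵥ c) := rfl
    _ ≤ Real.arccos (Real.cos (geo a b + geo b c)) := by
        rw [hcosadd]; exact arccos_anti hkey
    _ = geo a b + geo b c := Real.arccos_cos h0 (le_of_lt hπ)

lemma geo_path (x : ℕ → Fin 3 → ℝ) (hx : ∀ i, S2 (x i)) :
    ∀ m, geo (x 0) (x m) ≤ ∑ i ∈ Finset.range m, geo (x i) (x (i + 1)) := by
  intro m
  induction m with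
  | zero =>
      simp only [Finset.range_zero, Finset.sum_empty]
      rw [geo, show x 0 ⬝ᵥ x 0 = 1 from hx 0, Real.arccos_one]
  | succ m ih =>
      rw [Finset.sum_range_succ]
      exact le_trans (geo_triangle (x 0) (x m) (x (m+1)) (hx 0) (hx m) (hx (m+1)))
        (by linarith)

theorem stmt_5 (n : ℕ) (hn : 3 ≤ n) (hodd : Odd n) (Γ : ℕ → Fin 3 → ℝ)
    (hS : ∀ i, S2 (Γ i)) (hper : Γ n = Γ 0) :
    (∑ i ∈ Finset.range n, geo (Γ i) (Γ (i + 1))) ≤ ((n : ℝ) - 1) * π ∧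
      (Finset.range n).inf' (Finset.nonempty_range_iff.mpr (by omega))
          (fun i => geo (Γ i) (Γ (i + 1))) ≤ π - π / n := by
  have hδS : ∀ i, S2 (((-1:ℝ)^i) • Γ i) := by
    intro i
    show (((-1:ℝ)^i) • Γ i) ⬝ᵥ (((-1:ℝ)^i) • Γ i) = 1
    rw [smul_dotProduct, dotProduct_smul, smul_eq_mul, smul_eq_mul,
      show (Γ i) ⬝ᵥ (Γ i) = 1 from hS i, mul_one, ← pow_add]
    exact Even.neg_one_pow ⟨i, rfl⟩
  have hedge : ∀ i, geo (((-1:ℝ)^i) • Γ i) (((-1:ℝ)^(i+1)) • Γ (i+1))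
      = π - geo (Γ i) (Γ (i+1)) := by
    intro i
    rw [geo, geo, smul_dotProduct, dotProduct_smul, smul_eq_mul, smul_eq_mul,
      ← mul_assoc, ← pow_add, Odd.neg_one_pow ⟨i, by ring⟩, neg_one_mul,
      Real.arccos_neg]
  have hsum : (∑ i ∈ Finset.range n, geo (Γ i) (Γ (i+1))) ≤ ((n:ℝ)-1)*π := by
    have hp := geo_path (fun i => ((-1:ℝ)^i) • Γ i) hδS n
    simp only [hedge] at hp
    have hend : geo (((-1:ℝ)^0) • Γ 0) (((-1:ℝ)^n) • Γ n) = π := by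
      rw [pow_zero, one_smul, Odd.neg_one_pow hodd, hper, geo, dotProduct_smul,
        smul_eq_mul, show Γ 0 ⬝ᵥ Γ 0 = 1 from hS 0, mul_one, Real.arccos_neg_one]
    rw [hend, Finset.sum_sub_distrib, Finset.sum_const, Finset.card_range,
      nsmul_eq_mul] at hp
    linarith
  refine ⟨hsum, ?_⟩
  have hpos : (0:ℝ) < n := by exact_mod_cast Nat.pos_of_ne_zero (by omega)
  have hcard := Finset.card_nsmul_le_sum (Finset.range n)
    (fun i => geo (Γ i) (Γ (i+1)))
    ((Finset.range n).inf' (Finset.nonempty_range_iff.mpr (by omega))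
      (fun i => geo (Γ i) (Γ (i + 1))))
    (fun i hi => Finset.inf'_le _ hi)
  rw [Finset.card_range, nsmul_eq_mul] at hcard
  have h2 : π - π/n = ((n:ℝ)-1)*π/n := by field_simp
  rw [h2, le_div_iff₀ hpos]
  nlinarith [hcard.trans hsum]
end
end
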